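/- Let F be a field of characteristic 2, let p = x^d + p₁x^{d-1} + … + p_d ∈ F[x] be a monic irreducible polynomial of even degree d = 2e (where p_k denotes the coefficient of x^{d-k}, with p₀ = 1), let L = F[x]/(p), and let t_p : L → F be the F-linear map with t_p(x^j) = 0 for 0 ≤ j ≤ d-2 and t_p(x^{d-1}) = 1. Let a ∈ F and let i ≥ 0 be an integer. Then the Scharlau transfer t_p∘[1, ax^i] (a quadratic form of dimension 2d over F) is Witt equivalent to the orthogonal sum ⊥_{j=0}^{e-1} [p_{2j+1}, aγ_{i-2j-1}], where γ_n ∈ F is the coefficient of x^{d-1} in the remainder of x^{d+n-1} upon division by p for n ≥ 0, and γ_n := 0 for n < 0. -/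

import Mathlib

open QuadraticMap Polynomial

/-- The binary quadratic form `[a,b] : (u,v) ↦ a u² + u v + b v²` over `K`. -/
noncomputable def binQF (K : Type*) [CommRing K] (a b : K) : QuadraticForm K (K × K) :=
  a • QuadraticMap.linMulLin (LinearMap.fst K K K) (LinearMap.fst K K K)
    + QuadraticMap.linMulLin (LinearMap.fst K K K) (LinearMap.snd K K K)
    + b • QuadraticMap.linMulLin (LinearMap.snd K K K) (LinearMap.snd K K K)

/-- The hyperbolic plane `(u,v) ↦ u v` over `K`. -/
noncomputable def hypQF (K : Type*) [CommRing K] : QuadraticForm K (K × K) :=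
  QuadraticMap.linMulLin (LinearMap.fst K K K) (LinearMap.snd K K K)

/-- The orthogonal sum of `r` copies of the hyperbolic plane over `K`. -/
noncomputable def hypPow (K : Type*) [CommRing K] (r : ℕ) : QuadraticForm K (Fin r → K × K) :=
  QuadraticMap.pi fun _ => hypQF K

/-- Witt equivalence of quadratic forms over `K`: `Q₁ ⊥ H^{⊥r}` is isometric to
`Q₂ ⊥ H^{⊥s}` for some `r, s`. -/
def WittEquiv {K : Type*} [CommRing K] {V₁ V₂ : Type*} [AddCommGroup V₁] [Module K V₁]
    [AddCommGroup V₂] [Module K V₂]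
    (Q₁ : QuadraticForm K V₁) (Q₂ : QuadraticForm K V₂) : Prop :=
  ∃ r s : ℕ, (Q₁.prod (hypPow K r)).Equivalent (Q₂.prod (hypPow K s))

/-- The Scharlau transfer of a quadratic form `Q` over `L` along an `F`-linear functional
`t : L → F`: the quadratic form `t ∘ Q` over `F` on `V` viewed as an `F`-vector space. -/
noncomputable def scharlauTransfer {F L : Type*} [Field F] [CommRing L] [Algebra F L]
    (V : Type*) [AddCommGroup V] [Module L V] [Module F V] [IsScalarTower F L V]
    (t : L →ₗ[F] F) (Q : QuadraticForm L V) : QuadraticForm F V :=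
  t.compQuadraticMap' Q

namespace TransferAux

variable {F : Type*} [Field F]

/-- `t(xⁿ)` extended by zero to negative integers. -/
noncomputable def auxT (p : Polynomial F) (t : AdjoinRoot p →ₗ[F] F) (n : ℤ) : F :=
  if n < 0 then 0 else t (AdjoinRoot.root p ^ n.toNat)

variable (p : Polynomial F) (hmonic : p.Monic) (d : ℕ) (hd : p.natDegree = d) (hd1 : 1 ≤ d)
  (t : AdjoinRoot p →ₗ[F] F)
  (ht : ∀ j : ℕ, j < d → t (AdjoinRoot.root p ^ j) = if j = d - 1 then 1 else 0)

lemma auxT_coe (n : ℕ) : auxT p t n = t (AdjoinRoot.root p ^ n) := by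
  simp [auxT]

include hd1 ht in
lemma auxT_lt {N : ℤ} (hN : N < d) : auxT p t N = if N = (d : ℤ) - 1 then 1 else 0 := by
  by_cases h0 : N < 0
  · rw [auxT, if_pos h0, if_neg (by omega)]
  · rw [auxT, if_neg h0, ht N.toNat (by omega)]
    have : N.toNat = d - 1 ↔ N = (d : ℤ) - 1 := by omega
    simp only [this]

include hmonic hd hd1 ht in
lemma keyR (N : ℤ) :
    ∑ j ∈ Finset.range (d + 1), p.coeff (d - j) * auxT p t (N - j) =
      if N = (d : ℤ) - 1 then 1 else 0 := by
  rcases lt_or_ge N d with hN | hN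
  · rw [Finset.sum_congr rfl fun j hj => by
      rw [auxT_lt p d hd1 t ht (show N - (j : ℕ) < (d : ℤ) by omega)]]
    by_cases hN1 : N = (d : ℤ) - 1
    · rw [if_pos hN1]
      rw [Finset.sum_eq_single 0]
      · rw [if_pos (by omega), Nat.sub_zero, ← hd, hmonic.coeff_natDegree, mul_one]
      · intro j hj hj0
        rw [if_neg (by omega), mul_zero]
      · intro h; exact absurd (Finset.mem_range.mpr (by omega)) h
    · rw [if_neg hN1]
      refine Finset.sum_eq_zero fun j hj => ?_
      rw [Finset.mem_range] at hj
      rw [if_neg (by omega), mul_zero]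
  · rw [if_neg (by omega)]
    have hn : d ≤ N.toNat := by omega
    have hstep : ∀ j ∈ Finset.range (d + 1),
        p.coeff (d - j) * auxT p t (N - j) =
          t (AdjoinRoot.root p ^ (N.toNat - d) *
            (p.coeff (d - j) • AdjoinRoot.root p ^ (d - j))) := by
      intro j hj
      rw [Finset.mem_range] at hj
      rw [auxT, if_neg (by omega)]
      have h1 : (N - j).toNat = (N.toNat - d) + (d - j) := by omega
      rw [h1, pow_add, mul_smul_comm, _root_.map_smul, smul_eq_mul]
    rw [Finset.sum_congr rfl hstep, ← map_sum, ← Finset.mul_sum]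
    have hsum : ∑ j ∈ Finset.range (d + 1),
        p.coeff (d - j) • AdjoinRoot.root p ^ (d - j) = 0 := by
      have := Finset.sum_range_reflect
        (fun j => p.coeff j • AdjoinRoot.root p ^ j) (d + 1)
      simp only [Nat.add_sub_cancel] at this
      rw [this]
      have : ∑ j ∈ Finset.range (d + 1), p.coeff j • AdjoinRoot.root p ^ j
          = aeval (AdjoinRoot.root p) p := by
        rw [Polynomial.aeval_eq_sum_range (R := F) (p := p) (AdjoinRoot.root p), hd]
      rw [this, AdjoinRoot.aeval_eq, AdjoinRoot.mk_self]
    rw [hsum, mul_zero, map_zero]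


include hmonic hd hd1 ht in
lemma t_pow_eq_coeff (m : ℕ) :
    t (AdjoinRoot.root p ^ m) = ((X : Polynomial F) ^ m %ₘ p).coeff (d - 1) := by
  have hp1 : p ≠ 1 := fun h => by simp [h] at hd; omega
  have hr : ((X : Polynomial F) ^ m %ₘ p).natDegree < d := by
    rw [← hd]; exact natDegree_modByMonic_lt _ hmonic hp1
  have hmk : AdjoinRoot.root p ^ m = aeval (AdjoinRoot.root p) ((X : Polynomial F) ^ m %ₘ p) := by
    have h2 := Polynomial.modByMonic_add_div ((X : Polynomial F) ^ m) p
    calc AdjoinRoot.root p ^ m = aeval (AdjoinRoot.root p) ((X : Polynomial F) ^ m) := by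
          simp
      _ = aeval (AdjoinRoot.root p) ((X : Polynomial F) ^ m %ₘ p + p * ((X : Polynomial F) ^ m /ₘ p)) := by
          rw [h2]
      _ = aeval (AdjoinRoot.root p) ((X : Polynomial F) ^ m %ₘ p) := by
          simp [map_add, map_mul, AdjoinRoot.aeval_eq, AdjoinRoot.mk_self]
  rw [hmk, Polynomial.aeval_eq_sum_range' hr, map_sum]
  have : ∀ j ∈ Finset.range d,
      t (((X : Polynomial F) ^ m %ₘ p).coeff j • AdjoinRoot.root p ^ j) =
        if j = d - 1 then ((X : Polynomial F) ^ m %ₘ p).coeff j else 0 := by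
    intro j hj
    rw [Finset.mem_range] at hj
    rw [_root_.map_smul, ht j hj, smul_eq_mul, mul_ite, mul_one, mul_zero]
  rw [Finset.sum_congr rfl this, Finset.sum_ite_eq' (Finset.range d) (d - 1)]
  rw [if_pos (Finset.mem_range.mpr (by omega))]

/-- Truncated reversals of `p`: `qe m = ∑_{k ≤ m} p_{m-k} x^k` (coefficients from the top). -/
noncomputable def qe (d m : ℕ) : AdjoinRoot p :=
  ∑ k ∈ Finset.range (m + 1), p.coeff (d - m + k) • AdjoinRoot.root p ^ k

include hmonic hd hd1 ht in
lemma t_pow_mul_qe {s m : ℕ} (hs : s < d) (hm : m < d) :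
    t (AdjoinRoot.root p ^ s * qe p d m) = if s + m = d - 1 then 1 else 0 := by
  have hexp : t (AdjoinRoot.root p ^ s * qe p d m) =
      ∑ k ∈ Finset.range (m + 1), p.coeff (d - m + k) * auxT p t ((s + k : ℕ) : ℤ) := by
    rw [qe, Finset.mul_sum, map_sum]
    refine Finset.sum_congr rfl fun k hk => ?_
    rw [mul_smul_comm, _root_.map_smul, smul_eq_mul, ← pow_add, auxT_coe]
  rw [hexp]
  have hrefl : ∑ k ∈ Finset.range (m + 1), p.coeff (d - m + k) * auxT p t ((s + k : ℕ) : ℤ) =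
      ∑ j ∈ Finset.range (m + 1), p.coeff (d - j) * auxT p t ((s + m : ℕ) - (j : ℕ)) := by
    rw [← Finset.sum_range_reflect (fun j => p.coeff (d - j) * auxT p t ((s + m : ℕ) - (j : ℕ)))]
    refine Finset.sum_congr rfl fun k hk => ?_
    rw [Finset.mem_range] at hk
    congr 1
    · congr 1; omega
    · congr 1; omega
  rw [hrefl]
  have hext : ∑ j ∈ Finset.range (m + 1), p.coeff (d - j) * auxT p t ((s + m : ℕ) - (j : ℕ)) =
      ∑ j ∈ Finset.range (d + 1), p.coeff (d - j) * auxT p t ((s + m : ℕ) - (j : ℕ)) := by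
    refine Finset.sum_subset (by intro x hx; rw [Finset.mem_range] at *; omega) ?_
    intro j hj hj'
    rw [Finset.mem_range] at hj hj'
    rw [auxT_lt p d hd1 t ht (by omega), if_neg (by omega), mul_zero]
  rw [hext, keyR p hmonic d hd hd1 t ht]
  have : ((s + m : ℕ) : ℤ) = (d : ℤ) - 1 ↔ s + m = d - 1 := by omega
  simp only [this]

include hmonic hd hd1 in
lemma charP_adjoinRoot [CharP F 2] : CharP (AdjoinRoot p) 2 := by
  have hdeg : p.degree ≠ 0 := by
    rw [Polynomial.degree_eq_natDegree hmonic.ne_zero, hd]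
    exact_mod_cast (by omega : d ≠ 0)
  exact charP_of_injective_algebraMap (AdjoinRoot.of.injective_of_degree_ne_zero hdeg) 2

include hmonic hd hd1 ht in
lemma t_qe_sq [CharP F 2] {m : ℕ} (hm : m < d) :
    t (qe p d m * qe p d m) = p.coeff (2 * (d - 1 - m) + 1) := by
  haveI : CharP (AdjoinRoot p) 2 := charP_adjoinRoot p hmonic d hd hd1
  have hsq : t (qe p d m * qe p d m) =
      ∑ k ∈ Finset.range (m + 1), p.coeff (d - m + k) ^ 2 * auxT p t ((2 * k : ℕ) : ℤ) := by
    rw [qe, CharTwo.sum_mul_self, map_sum]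
    refine Finset.sum_congr rfl fun k hk => ?_
    rw [smul_mul_smul_comm, ← pow_add, _root_.map_smul, smul_eq_mul, auxT_coe, two_mul, pow_two]
  rw [hsq]
  have hrefl : ∑ k ∈ Finset.range (m + 1), p.coeff (d - m + k) ^ 2 * auxT p t ((2 * k : ℕ) : ℤ) =
      ∑ j ∈ Finset.range (m + 1), p.coeff (d - j) ^ 2 * auxT p t (2 * (m : ℤ) - 2 * j) := by
    rw [← Finset.sum_range_reflect (fun j => p.coeff (d - j) ^ 2 * auxT p t (2 * (m : ℤ) - 2 * j))]
    refine Finset.sum_congr rfl fun k hk => ?_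
    rw [Finset.mem_range] at hk
    simp only [Nat.add_sub_cancel]
    have e1 : d - (m - k) = d - m + k := by omega
    have e2 : 2 * (m : ℤ) - 2 * ((m - k : ℕ) : ℤ) = ((2 * k : ℕ) : ℤ) := by omega
    rw [e1, e2]
  rw [hrefl]
  have hext : ∑ j ∈ Finset.range (m + 1), p.coeff (d - j) ^ 2 * auxT p t (2 * (m : ℤ) - 2 * j) =
      ∑ j ∈ Finset.range (d + 1), p.coeff (d - j) ^ 2 * auxT p t (2 * (m : ℤ) - 2 * j) := by
    refine Finset.sum_subset (by intro x hx; rw [Finset.mem_range] at *; omega) ?_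
    intro j hj hj'
    rw [Finset.mem_range] at hj hj'
    rw [auxT, if_pos (by omega), mul_zero]
  rw [hext]
  -- turn the diagonal sum into a double sum
  set s : Finset ℕ := Finset.range (d + 1) with hs
  set f : ℕ × ℕ → F := fun x =>
    p.coeff (d - x.1) * p.coeff (d - x.2) * auxT p t (2 * (m : ℤ) - x.1 - x.2) with hf
  have hdiag : ∑ j ∈ s, p.coeff (d - j) ^ 2 * auxT p t (2 * (m : ℤ) - 2 * j)
      = ∑ x ∈ s.diag, f x := by
    rw [Finset.sum_diag]
    refine Finset.sum_congr rfl fun j hj => ?_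
    rw [hf]
    simp only []
    rw [pow_two]
    congr 2
    omega
  have hoff : ∑ x ∈ s.offDiag, f x = 0 := by
    refine Finset.sum_involution (fun x _ => Prod.swap x) ?_ ?_ ?_ ?_
    · intro x hx
      have : f x.swap = f x := by
        rw [hf]; simp only [Prod.fst_swap, Prod.snd_swap]
        ring_nf
        try (congr 1; omega)
      rw [this, ← two_mul, CharTwo.two_eq_zero, zero_mul]
    · intro x hx _
      rw [Finset.mem_offDiag] at hx
      intro hcon
      exact hx.2.2 ((congrArg Prod.fst hcon).symm)
    · intro x hx
      rw [Finset.mem_offDiag] at *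
      exact ⟨hx.2.1, hx.1, fun h => hx.2.2 h.symm⟩
    · intro x hx; rfl
  have hfull : ∑ x ∈ s.diag, f x = ∑ j ∈ s, ∑ j' ∈ s, f (j, j') := by
    rw [← Finset.sum_product', ← Finset.diag_union_offDiag s,
      Finset.sum_union (Finset.disjoint_diag_offDiag s), hoff, add_zero]
  rw [hdiag, hfull]
  have hinner : ∀ j ∈ s, ∑ j' ∈ s, f (j, j') =
      p.coeff (d - j) * (if 2 * (m : ℤ) - j = (d : ℤ) - 1 then 1 else 0) := by
    intro j hj
    have : ∑ j' ∈ s, f (j, j') =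
        p.coeff (d - j) * ∑ j' ∈ s, p.coeff (d - j') * auxT p t ((2 * (m : ℤ) - j) - j') := by
      rw [Finset.mul_sum]
      refine Finset.sum_congr rfl fun j' hj' => ?_
      simp only [hf]
      ring
    rw [this, hs, keyR p hmonic d hd hd1 t ht (2 * (m : ℤ) - j)]
  rw [Finset.sum_congr rfl hinner]
  by_cases hc : d ≤ 2 * m + 1
  · rw [Finset.sum_eq_single (2 * m + 1 - d)]
    · rw [if_pos (by omega), mul_one]
      congr 1
      omega
    · intro j hj hj'
      rw [Finset.mem_range] at hj
      rw [if_neg (by omega), mul_zero]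
    · intro h
      exact absurd (Finset.mem_range.mpr (by omega)) h
  · rw [Finset.sum_eq_zero, Eq.comm]
    · apply coeff_eq_zero_of_natDegree_lt
      omega
    · intro j hj
      rw [Finset.mem_range] at hj
      rw [if_neg (by omega), mul_zero]


-- value of binQF
lemma binQF_apply {K : Type*} [CommRing K] (a b : K) (z : K × K) :
    binQF K a b z = a * (z.1 * z.1) + z.1 * z.2 + b * (z.2 * z.2) := by
  simp [binQF, QuadraticMap.linMulLin_apply, smul_eq_mul]

lemma hypQF_apply {K : Type*} [CommRing K] (z : K × K) : hypQF K z = z.1 * z.2 := by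
  simp [hypQF, QuadraticMap.linMulLin_apply]

namespace TransferAux2

variable {F : Type*} [Field F] (p : Polynomial F)

lemma t_sum_mul_sum {ι κ : Type*} [Fintype ι] [Fintype κ] (T : AdjoinRoot p →ₗ[F] F)
    (c : ι → F) (c' : κ → F) (y : ι → AdjoinRoot p) (z : κ → AdjoinRoot p) :
    T ((∑ j, c j • y j) * (∑ k, c' k • z k)) = ∑ j, ∑ k, (c j * c' k) * T (y j * z k) := by
  rw [Finset.sum_mul_sum, map_sum]
  refine Finset.sum_congr rfl fun j _ => ?_
  rw [map_sum]
  refine Finset.sum_congr rfl fun k _ => ?_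
  rw [smul_mul_smul_comm, _root_.map_smul, smul_eq_mul]

lemma t_sum_mul_self {ι : Type*} [Fintype ι] [CharP (AdjoinRoot p) 2]
    (T : AdjoinRoot p →ₗ[F] F) (c : ι → F) (y : ι → AdjoinRoot p) :
    T ((∑ j, c j • y j) * (∑ j, c j • y j)) = ∑ j, (c j * c j) * T (y j * y j) := by
  rw [CharTwo.sum_mul_self, map_sum]
  refine Finset.sum_congr rfl fun j _ => ?_
  rw [smul_mul_smul_comm, _root_.map_smul, smul_eq_mul]

end TransferAux2

section Maps

variable {F : Type*} [Field F] (p : Polynomial F) (d e : ℕ)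

/-- The `u`-component of the isometry. -/
noncomputable def Umap (g : Fin e → F) (b h : Fin e → F × F) : AdjoinRoot p :=
  (∑ j : Fin e, (b j).1 • qe p d (e + (j : ℕ)))
    + ∑ l : Fin e, ((h l).2 + g l * (h l).1) • qe p d (e - 1 - (l : ℕ))

/-- The `v`-component of the isometry. -/
noncomputable def Vmap (b h : Fin e → F × F) : AdjoinRoot p :=
  (∑ j : Fin e, (b j).2 • AdjoinRoot.root p ^ (e - 1 - (j : ℕ)))
    + ∑ l : Fin e, (h l).1 • AdjoinRoot.root p ^ (e + (l : ℕ))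

end Maps

variable (e : ℕ)

include hmonic hd hd1 ht in
lemma transfer_value [CharP F 2] (hde : d = 2 * e) (a : F) (i : ℕ)
    (g : Fin e → F) (hg : ∀ l : Fin e, g l = a * auxT p t ((i + 2 * (e + (l : ℕ)) : ℕ)))
    (b h : Fin e → F × F) :
    t (Umap p d e g b h * Umap p d e g b h + Umap p d e g b h * Vmap p e b h
        + (algebraMap F (AdjoinRoot p) a * AdjoinRoot.root p ^ i)
          * (Vmap p e b h * Vmap p e b h)) =
      (∑ j : Fin e, (p.coeff (d - (2 * (j : ℕ) + 1)) * ((b j).1 * (b j).1)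
        + (b j).1 * (b j).2
        + (a * auxT p t ((i + 2 * (e - 1 - (j : ℕ)) : ℕ))) * ((b j).2 * (b j).2)))
      + ∑ l : Fin e, (h l).1 * (h l).2 := by
  haveI : CharP (AdjoinRoot p) 2 := charP_adjoinRoot p hmonic d hd hd1
  have he1 : 1 ≤ e := by omega
  set B1 : Fin e → F := fun j => (b j).1 with hB1
  set B2 : Fin e → F := fun j => (b j).2 with hB2
  set H1 : Fin e → F := fun l => (h l).1 with hH1
  set H2 : Fin e → F := fun l => (h l).2 with hH2
  set Y : Fin e → F := fun l => (h l).2 + g l * (h l).1 with hY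
  -- the u·u term
  have huu : t (Umap p d e g b h * Umap p d e g b h) =
      ∑ j : Fin e, p.coeff (d - (2 * (j : ℕ) + 1)) * (B1 j * B1 j) := by
    rw [Umap, CharTwo.add_mul_self, map_add,
      TransferAux2.t_sum_mul_self p t, TransferAux2.t_sum_mul_self p t]
    have h2 : ∑ l : Fin e, (Y l * Y l) * t (qe p d (e - 1 - (l : ℕ)) * qe p d (e - 1 - (l : ℕ)))
        = 0 := by
      refine Finset.sum_eq_zero fun l _ => ?_
      have hl := l.isLt
      rw [t_qe_sq p hmonic d hd hd1 t ht (by omega),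
        coeff_eq_zero_of_natDegree_lt (by rw [hd]; omega), mul_zero]
    rw [h2, add_zero]
    refine Finset.sum_congr rfl fun j _ => ?_
    have hj := j.isLt
    rw [t_qe_sq p hmonic d hd hd1 t ht (by omega)]
    have harg : 2 * (d - 1 - (e + (j : ℕ))) + 1 = d - (2 * (j : ℕ) + 1) := by omega
    rw [harg, mul_comm]
  -- the u·v term
  have huv : t (Umap p d e g b h * Vmap p e b h) =
      (∑ j : Fin e, B1 j * B2 j) + ∑ l : Fin e, Y l * H1 l := by
    rw [Umap, Vmap, add_mul, mul_add, mul_add, map_add, map_add, map_add,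
      TransferAux2.t_sum_mul_sum p t, TransferAux2.t_sum_mul_sum p t,
      TransferAux2.t_sum_mul_sum p t, TransferAux2.t_sum_mul_sum p t]
    have e11 : ∑ j : Fin e, ∑ j' : Fin e, (B1 j * B2 j')
        * t (qe p d (e + (j : ℕ)) * AdjoinRoot.root p ^ (e - 1 - (j' : ℕ)))
        = ∑ j : Fin e, B1 j * B2 j := by
      refine Finset.sum_congr rfl fun j _ => ?_
      have hj := j.isLt
      rw [Fintype.sum_eq_single j, mul_comm (qe p d (e + (j : ℕ))),
        t_pow_mul_qe p hmonic d hd hd1 t ht (by omega) (by omega), if_pos (by omega), mul_one]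
      intro j' hj'
      have hj'2 := j'.isLt
      have hne : (j' : ℕ) ≠ (j : ℕ) := by simpa [Fin.ext_iff] using hj'
      rw [mul_comm (qe p d (e + (j : ℕ))),
        t_pow_mul_qe p hmonic d hd hd1 t ht (by omega) (by omega), if_neg (by omega), mul_zero]
    have e12 : ∑ j : Fin e, ∑ l : Fin e, (B1 j * H1 l)
        * t (qe p d (e + (j : ℕ)) * AdjoinRoot.root p ^ (e + (l : ℕ)))
        = 0 := by
      refine Finset.sum_eq_zero fun j _ => Finset.sum_eq_zero fun l _ => ?_
      have hj := j.isLt; have hl := l.isLt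
      rw [mul_comm (qe p d (e + (j : ℕ))),
        t_pow_mul_qe p hmonic d hd hd1 t ht (by omega) (by omega), if_neg (by omega), mul_zero]
    have e21 : ∑ l : Fin e, ∑ j : Fin e, (Y l * B2 j)
        * t (qe p d (e - 1 - (l : ℕ)) * AdjoinRoot.root p ^ (e - 1 - (j : ℕ)))
        = 0 := by
      refine Finset.sum_eq_zero fun l _ => Finset.sum_eq_zero fun j _ => ?_
      have hj := j.isLt; have hl := l.isLt
      rw [mul_comm (qe p d (e - 1 - (l : ℕ))),
        t_pow_mul_qe p hmonic d hd hd1 t ht (by omega) (by omega), if_neg (by omega), mul_zero]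
    have e22 : ∑ l : Fin e, ∑ l' : Fin e, (Y l * H1 l')
        * t (qe p d (e - 1 - (l : ℕ)) * AdjoinRoot.root p ^ (e + (l' : ℕ)))
        = ∑ l : Fin e, Y l * H1 l := by
      refine Finset.sum_congr rfl fun l _ => ?_
      have hl := l.isLt
      rw [Fintype.sum_eq_single l, mul_comm (qe p d (e - 1 - (l : ℕ))),
        t_pow_mul_qe p hmonic d hd hd1 t ht (by omega) (by omega), if_pos (by omega), mul_one]
      intro l' hl'
      have hl'2 := l'.isLt
      have hne : (l' : ℕ) ≠ (l : ℕ) := by simpa [Fin.ext_iff] using hl'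
      rw [mul_comm (qe p d (e - 1 - (l : ℕ))),
        t_pow_mul_qe p hmonic d hd hd1 t ht (by omega) (by omega), if_neg (by omega), mul_zero]
    rw [e11, e12, e21, e22, add_zero, zero_add]
  -- the (a·xⁱ)·v·v term
  have hvv : t ((algebraMap F (AdjoinRoot p) a * AdjoinRoot.root p ^ i)
        * (Vmap p e b h * Vmap p e b h)) =
      (∑ j : Fin e, (a * auxT p t ((i + 2 * (e - 1 - (j : ℕ)) : ℕ))) * (B2 j * B2 j))
        + ∑ l : Fin e, g l * (H1 l * H1 l) := by
    rw [Vmap, CharTwo.add_mul_self, mul_add, map_add]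
    have hpart : ∀ (c : Fin e → F) (s : Fin e → ℕ),
        t ((algebraMap F (AdjoinRoot p) a * AdjoinRoot.root p ^ i)
          * ∑ j : Fin e, (c j • AdjoinRoot.root p ^ s j) * (c j • AdjoinRoot.root p ^ s j)) =
        ∑ j : Fin e, (a * auxT p t ((i + 2 * s j : ℕ))) * (c j * c j) := by
      intro c s
      rw [Finset.mul_sum, map_sum]
      refine Finset.sum_congr rfl fun j _ => ?_
      rw [smul_mul_smul_comm, mul_smul_comm, _root_.map_smul, smul_eq_mul, ← pow_add]
      have hx : algebraMap F (AdjoinRoot p) a * AdjoinRoot.root p ^ i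
          * AdjoinRoot.root p ^ (s j + s j) = a • AdjoinRoot.root p ^ (i + 2 * s j) := by
        rw [mul_assoc, ← pow_add, ← Algebra.smul_def,
          show i + (s j + s j) = i + 2 * s j from by omega]
      rw [hx, _root_.map_smul, smul_eq_mul, auxT_coe]
      ring
    rw [CharTwo.sum_mul_self, CharTwo.sum_mul_self, hpart, hpart]
    congr 1
    refine Finset.sum_congr rfl fun l _ => ?_
    rw [hg l]
  rw [map_add, map_add, huu, huv, hvv]
  have hfin : (∑ l : Fin e, Y l * H1 l) + ∑ l : Fin e, g l * (H1 l * H1 l)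
      = ∑ l : Fin e, H1 l * H2 l := by
    rw [← Finset.sum_add_distrib]
    refine Finset.sum_congr rfl fun l _ => ?_
    have hcc : g l * (H1 l * H1 l) + g l * (H1 l * H1 l) = 0 := CharTwo.add_self_eq_zero _
    rw [hY]
    simp only []
    linear_combination hcc
  have hsplit : ∑ j : Fin e, (p.coeff (d - (2 * (j : ℕ) + 1)) * ((b j).1 * (b j).1)
        + (b j).1 * (b j).2
        + (a * auxT p t ((i + 2 * (e - 1 - (j : ℕ)) : ℕ))) * ((b j).2 * (b j).2))
      = (∑ j : Fin e, p.coeff (d - (2 * (j : ℕ) + 1)) * (B1 j * B1 j))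
        + (∑ j : Fin e, B1 j * B2 j)
        + ∑ j : Fin e, (a * auxT p t ((i + 2 * (e - 1 - (j : ℕ)) : ℕ))) * (B2 j * B2 j) := by
    rw [Finset.sum_add_distrib, Finset.sum_add_distrib]
  rw [hsplit, ← hfin]
  have hcomm : ∀ l : Fin e, H1 l * H2 l = (h l).1 * (h l).2 := fun l => rfl
  ring


include hmonic hd hd1 ht in
lemma t_qe_mul_sum {ι : Type*} [Fintype ι] (m : ℕ) (hm : m < d) (c : ι → F) (s : ι → ℕ)
    (hs : ∀ k, s k < d) :
    t (qe p d m * ∑ k : ι, c k • AdjoinRoot.root p ^ s k)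
      = ∑ k : ι, c k * (if s k + m = d - 1 then 1 else 0) := by
  rw [Finset.mul_sum, map_sum]
  refine Finset.sum_congr rfl fun k _ => ?_
  rw [mul_smul_comm, _root_.map_smul, smul_eq_mul, mul_comm (qe p d m),
    t_pow_mul_qe p hmonic d hd hd1 t ht (hs k) hm]

include hmonic hd hd1 ht in
lemma t_pow_mul_qsum {ι : Type*} [Fintype ι] (s : ℕ) (hs : s < d) (c : ι → F) (m : ι → ℕ)
    (hm : ∀ k, m k < d) :
    t (AdjoinRoot.root p ^ s * ∑ k : ι, c k • qe p d (m k))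
      = ∑ k : ι, c k * (if s + m k = d - 1 then 1 else 0) := by
  rw [Finset.mul_sum, map_sum]
  refine Finset.sum_congr rfl fun k _ => ?_
  rw [mul_smul_comm, _root_.map_smul, smul_eq_mul,
    t_pow_mul_qe p hmonic d hd hd1 t ht hs (hm k)]

include hmonic hd hd1 ht in
lemma theta_inj_aux (hde : d = 2 * e) (g : Fin e → F) (b h : Fin e → F × F)
    (hU : Umap p d e g b h = 0) (hV : Vmap p e b h = 0) :
    b = 0 ∧ h = 0 := by
  have he1 : 1 ≤ e := by omega
  have hh1 : ∀ l0 : Fin e, (h l0).1 = 0 := by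
    intro l0
    have hl0 := l0.isLt
    have h0 := congrArg (fun z => t (qe p d (e - 1 - (l0 : ℕ)) * z)) hV
    simp only [mul_zero, map_zero] at h0
    rw [Vmap, mul_add, map_add,
      t_qe_mul_sum p hmonic d hd hd1 t ht _ (by omega) _ _ (fun k => by have := k.isLt; omega),
      t_qe_mul_sum p hmonic d hd hd1 t ht _ (by omega) _ _ (fun k => by have := k.isLt; omega),
      Finset.sum_eq_zero (fun j _ => by have := j.isLt; rw [if_neg (by omega), mul_zero]),
      Fintype.sum_eq_single l0 (fun l' hl' => by
        have := l'.isLt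
        have hne : (l' : ℕ) ≠ (l0 : ℕ) := by simpa [Fin.ext_iff] using hl'
        rw [if_neg (by omega), mul_zero]),
      if_pos (by omega), mul_one, zero_add] at h0
    exact h0
  have hb2 : ∀ j0 : Fin e, (b j0).2 = 0 := by
    intro j0
    have hj0 := j0.isLt
    have h0 := congrArg (fun z => t (qe p d (e + (j0 : ℕ)) * z)) hV
    simp only [mul_zero, map_zero] at h0
    rw [Vmap, mul_add, map_add,
      t_qe_mul_sum p hmonic d hd hd1 t ht _ (by omega) _ _ (fun k => by have := k.isLt; omega),
      t_qe_mul_sum p hmonic d hd hd1 t ht _ (by omega) _ _ (fun k => by have := k.isLt; omega),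
      Fintype.sum_eq_single j0 (fun j' hj' => by
        have := j'.isLt
        have hne : (j' : ℕ) ≠ (j0 : ℕ) := by simpa [Fin.ext_iff] using hj'
        rw [if_neg (by omega), mul_zero]),
      if_pos (by omega), mul_one,
      Finset.sum_eq_zero (fun l _ => by have := l.isLt; rw [if_neg (by omega), mul_zero]),
      add_zero] at h0
    exact h0
  have hb1 : ∀ j0 : Fin e, (b j0).1 = 0 := by
    intro j0
    have hj0 := j0.isLt
    have h0 := congrArg (fun z => t (AdjoinRoot.root p ^ (e - 1 - (j0 : ℕ)) * z)) hU
    simp only [mul_zero, map_zero] at h0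
    rw [Umap, mul_add, map_add,
      t_pow_mul_qsum p hmonic d hd hd1 t ht _ (by omega) _ _ (fun k => by have := k.isLt; omega),
      t_pow_mul_qsum p hmonic d hd hd1 t ht _ (by omega) _ _ (fun k => by have := k.isLt; omega),
      Fintype.sum_eq_single j0 (fun j' hj' => by
        have := j'.isLt
        have hne : (j' : ℕ) ≠ (j0 : ℕ) := by simpa [Fin.ext_iff] using hj'
        rw [if_neg (by omega), mul_zero]),
      if_pos (by omega), mul_one,
      Finset.sum_eq_zero (fun l _ => by have := l.isLt; rw [if_neg (by omega), mul_zero]),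
      add_zero] at h0
    exact h0
  have hh2 : ∀ l0 : Fin e, (h l0).2 = 0 := by
    intro l0
    have hl0 := l0.isLt
    have h0 := congrArg (fun z => t (AdjoinRoot.root p ^ (e + (l0 : ℕ)) * z)) hU
    simp only [mul_zero, map_zero] at h0
    rw [Umap, mul_add, map_add,
      t_pow_mul_qsum p hmonic d hd hd1 t ht _ (by omega) _ _ (fun k => by have := k.isLt; omega),
      t_pow_mul_qsum p hmonic d hd hd1 t ht _ (by omega) _ _ (fun k => by have := k.isLt; omega),
      Finset.sum_eq_zero (fun j _ => by have := j.isLt; rw [if_neg (by omega), mul_zero]),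
      Fintype.sum_eq_single l0 (fun l' hl' => by
        have := l'.isLt
        have hne : (l' : ℕ) ≠ (l0 : ℕ) := by simpa [Fin.ext_iff] using hl'
        rw [if_neg (by omega), mul_zero]),
      if_pos (by omega), mul_one, zero_add] at h0
    rw [hh1 l0, mul_zero, add_zero] at h0
    exact h0
  constructor
  · funext j
    exact Prod.ext_iff.mpr ⟨hb1 j, hb2 j⟩
  · funext l
    exact Prod.ext_iff.mpr ⟨hh1 l, hh2 l⟩

section Theta

variable {F : Type*} [Field F] (p : Polynomial F) (d e : ℕ) (g : Fin e → F)

/-- First-projection coordinate functionals. -/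
noncomputable def cB1 (j : Fin e) : ((Fin e → F × F) × (Fin e → F × F)) →ₗ[F] F :=
  (LinearMap.fst F F F) ∘ₗ (LinearMap.proj j) ∘ₗ (LinearMap.fst F _ _)

noncomputable def cB2 (j : Fin e) : ((Fin e → F × F) × (Fin e → F × F)) →ₗ[F] F :=
  (LinearMap.snd F F F) ∘ₗ (LinearMap.proj j) ∘ₗ (LinearMap.fst F _ _)

noncomputable def cH1 (l : Fin e) : ((Fin e → F × F) × (Fin e → F × F)) →ₗ[F] F :=
  (LinearMap.fst F F F) ∘ₗ (LinearMap.proj l) ∘ₗ (LinearMap.snd F _ _)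

noncomputable def cH2 (l : Fin e) : ((Fin e → F × F) × (Fin e → F × F)) →ₗ[F] F :=
  (LinearMap.snd F F F) ∘ₗ (LinearMap.proj l) ∘ₗ (LinearMap.snd F _ _)

/-- The bundled linear map underlying the isometry. -/
noncomputable def theta :
    ((Fin e → F × F) × (Fin e → F × F)) →ₗ[F] (AdjoinRoot p × AdjoinRoot p) :=
  ((∑ j : Fin e, LinearMap.toSpanSingleton F _ (qe p d (e + (j : ℕ))) ∘ₗ cB1 e j)
    + ∑ l : Fin e, LinearMap.toSpanSingleton F _ (qe p d (e - 1 - (l : ℕ))) ∘ₗ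
        (cH2 e l + g l • cH1 e l)).prod
  ((∑ j : Fin e, LinearMap.toSpanSingleton F _ (AdjoinRoot.root p ^ (e - 1 - (j : ℕ))) ∘ₗ cB2 e j)
    + ∑ l : Fin e, LinearMap.toSpanSingleton F _ (AdjoinRoot.root p ^ (e + (l : ℕ))) ∘ₗ cH1 e l)

lemma theta_apply (w : (Fin e → F × F) × (Fin e → F × F)) :
    theta p d e g w = (Umap p d e g w.1 w.2, Vmap p e w.1 w.2) := by
  simp only [theta, LinearMap.prod_apply, Function.prod, LinearMap.add_apply, LinearMap.coe_sum,
    Finset.sum_apply, LinearMap.comp_apply, LinearMap.toSpanSingleton_apply,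
    LinearMap.smul_apply, cB1, cB2, cH1, cH2, LinearMap.fst_apply, LinearMap.snd_apply,
    LinearMap.proj_apply, smul_eq_mul, Umap, Vmap]

/-- Pad with a zero-dimensional factor. -/
noncomputable def padEquiv (F M : Type*) [Field F] [AddCommGroup M] [Module F M] :
    M ≃ₗ[F] M × (Fin 0 → F × F) :=
  LinearEquiv.ofLinear (LinearMap.prod LinearMap.id 0) (LinearMap.fst F _ _)
    (LinearMap.ext fun z => Prod.ext_iff.mpr ⟨rfl, Subsingleton.elim _ _⟩)
    (LinearMap.ext fun z => rfl)

@[simp] lemma padEquiv_apply (F M : Type*) [Field F] [AddCommGroup M] [Module F M] (x : M) :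
    padEquiv F M x = (x, 0) :=
  Prod.ext_iff.mpr ⟨rfl, Subsingleton.elim _ _⟩

end Theta

end TransferAux

open TransferAux in
/-- Lemma 4.2(i), even degree case: for `p` monic irreducible of even degree `d = 2e` over a
field `F` of characteristic `2`, the Scharlau transfer of `[1, a·x^i]` is Witt equivalent to
`⊥_{j=0}^{e-1} [p_{2j+1}, a·γ_{i-2j-1}]`. -/
theorem transfer_one_ax_pow_even_degree
    (F : Type*) [Field F] [CharP F 2] (p : Polynomial F)
    (hmonic : p.Monic) (hirr : Irreducible p)
    (d e : ℕ) (hd : p.natDegree = d) (hde : d = 2 * e)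
    (t : AdjoinRoot p →ₗ[F] F)
    (ht : ∀ j : ℕ, j < d → t (AdjoinRoot.root p ^ j) = if j = d - 1 then 1 else 0)
    (γ : ℤ → F)
    (hγ : ∀ n : ℤ, γ n =
      if n < 0 then 0 else ((X : Polynomial F) ^ (d + n.toNat - 1) %ₘ p).coeff (d - 1))
    (a : F) (i : ℕ) :
    WittEquiv
      (scharlauTransfer _ t
        (binQF (AdjoinRoot p) 1 (algebraMap F (AdjoinRoot p) a * AdjoinRoot.root p ^ i)))
      (QuadraticMap.pi fun j : Fin e =>
        binQF F (p.coeff (d - (2 * (j : ℕ) + 1))) (a * γ ((i : ℤ) - 2 * (j : ℕ) - 1))) := by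
  classical
  have hd1 : 1 ≤ d := by rw [← hd]; exact hirr.natDegree_pos
  have he1 : 1 ≤ e := by omega
  haveI : CharP (AdjoinRoot p) 2 := TransferAux.charP_adjoinRoot p hmonic d hd hd1
  haveI : Module.Finite F (AdjoinRoot p) :=
    Module.Finite.of_basis (AdjoinRoot.powerBasis' hmonic).basis
  have hγT : ∀ n : ℤ, γ n = TransferAux.auxT p t (n + d - 1) := by
    intro n
    rw [hγ n]
    by_cases hn : n < 0
    · rw [if_pos hn, TransferAux.auxT_lt p d hd1 t ht (by omega), if_neg (by omega)]
    · rw [if_neg hn, TransferAux.auxT, if_neg (by omega),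
        show ((n + (d : ℤ) - 1).toNat) = d + n.toNat - 1 from by omega,
        TransferAux.t_pow_eq_coeff p hmonic d hd hd1 t ht]
  set g : Fin e → F := fun l => a * γ ((i : ℤ) + 2 * (l : ℕ) + 1) with hgdef
  have hg : ∀ l : Fin e, g l = a * TransferAux.auxT p t ((i + 2 * (e + (l : ℕ)) : ℕ)) := by
    intro l
    have hl := l.isLt
    rw [hgdef]
    simp only []
    rw [hγT]
    congr 2
    omega
  have hγ2 : ∀ j : Fin e, a * γ ((i : ℤ) - 2 * (j : ℕ) - 1)
      = a * TransferAux.auxT p t ((i + 2 * (e - 1 - (j : ℕ)) : ℕ)) := by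
    intro j
    have hj := j.isLt
    rw [hγT]
    congr 2
    omega
  have hinj : Function.Injective (TransferAux.theta p d e g) := by
    rw [← LinearMap.ker_eq_bot, LinearMap.ker_eq_bot']
    intro w hw
    rw [TransferAux.theta_apply] at hw
    rw [Prod.ext_iff] at hw
    simp only [Prod.fst_zero, Prod.snd_zero] at hw
    have hz := TransferAux.theta_inj_aux p hmonic d hd hd1 t ht e hde g w.1 w.2 hw.1 hw.2
    exact Prod.ext_iff.mpr ⟨hz.1, hz.2⟩
  have hL : Module.finrank F (AdjoinRoot p) = d := by
    rw [(AdjoinRoot.powerBasis' hmonic).finrank, AdjoinRoot.powerBasis'_dim, hd]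
  have h2 : Module.finrank F (F × F) = 2 := by
    rw [Module.finrank_prod, Module.finrank_self]
  have hrank : Module.finrank F ((Fin e → F × F) × (Fin e → F × F))
      = Module.finrank F (AdjoinRoot p × AdjoinRoot p) := by
    rw [Module.finrank_prod, Module.finrank_prod, Module.finrank_pi_fintype]
    simp only [h2, hL, Finset.sum_const, Finset.card_univ, Fintype.card_fin, smul_eq_mul]
    omega
  have hbij : Function.Bijective (TransferAux.theta p d e g) :=
    ⟨hinj, (LinearMap.injective_iff_surjective_of_finrank_eq_finrank hrank).mp hinj⟩
  refine ⟨0, e, ?_⟩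
  refine ⟨QuadraticMap.IsometryEquiv.symm
    { toLinearEquiv := (LinearEquiv.ofBijective _ hbij).trans
        (TransferAux.padEquiv F (AdjoinRoot p × AdjoinRoot p)),
      map_app' := ?_ }⟩
  intro w
  obtain ⟨b, h⟩ := w
  simp only [LinearMap.toFun_eq_coe, LinearEquiv.coe_coe]
  rw [LinearEquiv.trans_apply, LinearEquiv.ofBijective_apply, TransferAux.theta_apply,
    TransferAux.padEquiv_apply]
  rw [QuadraticMap.prod_apply, QuadraticMap.prod_apply]
  have hzero : (hypPow F 0) (0 : Fin 0 → F × F) = 0 := by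
    simp [hypPow, QuadraticMap.pi_apply]
  rw [hzero, add_zero]
  rw [scharlauTransfer, LinearMap.compQuadraticMap'_apply, binQF_apply, one_mul]
  rw [TransferAux.transfer_value p hmonic d hd hd1 t ht e hde a i g hg b h]
  rw [QuadraticMap.pi_apply]
  have hsum : ∑ j : Fin e,
      (binQF F (p.coeff (d - (2 * (j : ℕ) + 1))) (a * γ ((i : ℤ) - 2 * (j : ℕ) - 1))) (b j)
      = ∑ j : Fin e, (p.coeff (d - (2 * (j : ℕ) + 1)) * ((b j).1 * (b j).1)
        + (b j).1 * (b j).2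
        + (a * TransferAux.auxT p t ((i + 2 * (e - 1 - (j : ℕ)) : ℕ))) * ((b j).2 * (b j).2)) := by
    refine Finset.sum_congr rfl fun j _ => ?_
    rw [binQF_apply, hγ2 j]
  rw [hsum]
  congr 1
  rw [hypPow, QuadraticMap.pi_apply]
  refine Finset.sum_congr rfl fun l _ => ?_
  rw [hypQF_apply]
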